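/- Let α > 1, w_o > 0 with w_o + e^{-w_o} = α, γ = w_o e^{w_o}, and define F(t) = (w_o/α) e^{-t/α} for t ≥ 0 and F(t) = 1 − 1/(1 + γ e^{-t}) for t < 0, and G(t) = α/(1 + γ e^t) for t ≥ 0, G(t) = 1 for t < 0. Then for all t ≥ 0, G(t) = exp(−∫_{−t}^∞ F(z) dz). -/

import Mathlib

open MeasureTheory

theorem G_integral_eq (α w γ : ℝ) (hα : 1 < α) (hw : 0 < w)
    (hwα : w + Real.exp (-w) = α) (hγ : γ = w * Real.exp w)
    (F G : ℝ → ℝ)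
    (hF : ∀ t : ℝ, F t = if 0 ≤ t then (w / α) * Real.exp (-t / α)
      else 1 - 1 / (1 + γ * Real.exp (-t)))
    (hG : ∀ t : ℝ, G t = if 0 ≤ t then α / (1 + γ * Real.exp t) else 1) :
    ∀ t : ℝ, 0 ≤ t → G t = Real.exp (-∫ z in Set.Ici (-t), F z) := by
  have hα0 : (0:ℝ) < α := lt_trans one_pos hα
  have hγ0 : 0 < γ := by rw [hγ]; positivity
  have hden : ∀ z : ℝ, 0 < 1 + γ * Real.exp z := fun z => by positivity
  -- tail integral
  have htail : ∫ z in Set.Ioi (0:ℝ), F z = w := by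
    have hcongr : Set.EqOn F (fun z => (w / α) * Real.exp (-z / α)) (Set.Ioi 0) := by
      intro z hz
      simp only [hF z, if_pos (le_of_lt hz.out)]
    rw [setIntegral_congr_fun measurableSet_Ioi hcongr]
    have hderiv : ∀ x ∈ Set.Ici (0:ℝ),
        HasDerivAt (fun z => -w * Real.exp (-z / α)) ((w / α) * Real.exp (-x / α)) x := by
      intro x _
      have h1 : HasDerivAt (fun z : ℝ => -z / α) (-1 / α) x := by
        simpa using ((hasDerivAt_id x).neg.div_const α)
      have h2 := (Real.hasDerivAt_exp (-x / α)).comp x h1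
      have h3 := h2.const_mul (-w)
      refine h3.congr_deriv ?_
      field_simp
    have hint : IntegrableOn (fun z => (w / α) * Real.exp (-z / α)) (Set.Ioi (0:ℝ)) := by
      have := (exp_neg_integrableOn_Ioi (0:ℝ) (b := α⁻¹) (by positivity)).const_mul (w / α)
      refine MeasureTheory.IntegrableOn.congr_fun this (fun z _ => ?_) measurableSet_Ioi
      rw [show -z / α = -α⁻¹ * z by ring]
    have htend : Filter.Tendsto (fun z => -w * Real.exp (-z / α)) Filter.atTop (nhds 0) := by
      have h1 : Filter.Tendsto (fun z : ℝ => -z / α) Filter.atTop Filter.atBot := by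
        apply Filter.Tendsto.atBot_div_const hα0
        exact Filter.tendsto_neg_atBot_iff.mpr Filter.tendsto_id
      have := (Real.tendsto_exp_atBot.comp h1).const_mul (-w)
      simpa using this
    rw [integral_Ioi_of_hasDerivAt_of_tendsto' hderiv hint htend]
    simp
  intro t ht
  have hnt : -t ≤ 0 := neg_nonpos.mpr ht
  -- the middle-piece integrand
  set g : ℝ → ℝ := fun z => 1 - 1 / (1 + γ * Real.exp (-z)) with hg_def
  have hgcont : Continuous g := by
    apply continuous_const.sub
    apply continuous_const.div
    · exact continuous_const.add (continuous_const.mul (Real.continuous_exp.comp continuous_neg))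
    · intro z; exact ne_of_gt (hden (-z))
  have hgderiv : ∀ x : ℝ, HasDerivAt (fun z => -Real.log (1 + γ * Real.exp (-z))) (g x) x := by
    intro x
    have h1 : HasDerivAt (fun z : ℝ => 1 + γ * Real.exp (-z))
        (γ * Real.exp (-x) * (-1)) x := by
      have := (Real.hasDerivAt_exp (-x)).comp x ((hasDerivAt_id x).neg)
      simpa using (this.const_mul γ).const_add 1
    have h2 := (Real.hasDerivAt_log (ne_of_gt (hden (-x)))).comp x h1
    have h3 := h2.neg
    refine h3.congr_deriv ?_
    have hd := ne_of_gt (hden (-x))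
    show _ = 1 - 1 / (1 + γ * Real.exp (-x))
    field_simp
    ring
  -- FTC on the middle piece
  have hmid : ∫ z in Set.Ico (-t) 0, F z = Real.log (1 + γ * Real.exp t) - Real.log (1 + γ) := by
    have hcongr : Set.EqOn F g (Set.Ico (-t) 0) := by
      intro z hz
      simp only [hF z, if_neg (not_le.mpr hz.2), hg_def]
    rw [setIntegral_congr_fun measurableSet_Ico hcongr]
    rw [MeasureTheory.integral_Ico_eq_integral_Ioo, ← MeasureTheory.integral_Ioc_eq_integral_Ioo,
      ← intervalIntegral.integral_of_le hnt]
    rw [intervalIntegral.integral_eq_sub_of_hasDerivAt (fun x _ => hgderiv x)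
      (hgcont.intervalIntegrable _ _)]
    simp [neg_neg, Real.exp_zero]
    ring
  -- split the integral
  have hsplit : ∫ z in Set.Ici (-t), F z
      = (∫ z in Set.Ico (-t) 0, F z) + ∫ z in Set.Ioi (0:ℝ), F z := by
    have hIciIoi : ∫ z in Set.Ici (0:ℝ), F z = ∫ z in Set.Ioi (0:ℝ), F z :=
      MeasureTheory.integral_Ici_eq_integral_Ioi
    have hunion : Set.Ico (-t) 0 ∪ Set.Ici 0 = Set.Ici (-t) := Set.Ico_union_Ici_eq_Ici hnt
    have hint1 : IntegrableOn F (Set.Ico (-t) 0) := by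
      refine (hgcont.integrableOn_Icc (a := -t) (b := 0)).mono_set Set.Ico_subset_Icc_self
        |>.congr_fun ?_ measurableSet_Ico
      intro z hz
      simp only [hF z, if_neg (not_le.mpr hz.2), hg_def]
    have hint2 : IntegrableOn F (Set.Ici (0:ℝ)) := by
      rw [integrableOn_Ici_iff_integrableOn_Ioi]
      have := (exp_neg_integrableOn_Ioi (0:ℝ) (b := α⁻¹) (by positivity)).const_mul (w / α)
      refine MeasureTheory.IntegrableOn.congr_fun this (fun z hz => ?_) measurableSet_Ioi
      simp only [hF z, if_pos (le_of_lt hz.out)]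
      rw [show -z / α = -α⁻¹ * z by ring]
    rw [← hunion, setIntegral_union ?_ measurableSet_Ici hint1 hint2, hIciIoi]
    · rw [Set.disjoint_left]
      intro z hz hz'
      exact absurd (hz'.out) (not_le.mpr hz.2)
  rw [hsplit, htail, hmid, hG t, if_pos ht]
  have hkey : Real.exp (-w) * (1 + γ) = α := by
    have : γ * Real.exp (-w) = w := by
      rw [hγ]; rw [mul_assoc, ← Real.exp_add]; simp
    calc Real.exp (-w) * (1 + γ) = Real.exp (-w) + γ * Real.exp (-w) := by ring
      _ = Real.exp (-w) + w := by rw [this]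
      _ = α := by linarith [hwα]
  rw [show -(Real.log (1 + γ * Real.exp t) - Real.log (1 + γ) + w)
      = Real.log (1 + γ) + (-w) + (-Real.log (1 + γ * Real.exp t)) by ring]
  rw [Real.exp_add, Real.exp_add, Real.exp_log (by positivity), Real.exp_neg (Real.log _),
    Real.exp_log (hden t)]
  rw [mul_comm (1 + γ)]
  rw [hkey]
  rw [div_eq_mul_inv]
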